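/- Let H be a real Hilbert space and C a nonempty closed convex subset of H. Let T : C → C be an asymptotically quasi-nonexpansive mapping with sequence {k_n} ⊂ [1,∞), k_n → 1, which is uniformly L-Lipschitz, and suppose F(T) is nonempty and bounded, say F(T) ⊆ {u ∈ C : ‖u‖ ≤ ω} for some ω > 0. Let {α_n} ⊂ [0,1] with α_n → 0, and set ε_n = (k_n − 1)(ω + ‖x_n‖)². Let {x_n} be generated by: x_0 ∈ C, C_0 = C; y_n = α_n x_n + (1 − α_n) T^n x_n; C_{n+1} = {v ∈ C_n : ‖v − y_n‖² ≤ ‖v − x_n‖² + ε_n}; and x_{n+1} is the metric projection of x_0 onto C_{n+1}. Then {x_n} converges strongly to the metric projection of x_0 onto F(T). -/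

import Mathlib

open Filter Topology

private lemma aux_tri {H : Type*} [NormedAddCommGroup H] (a b c : H) :
    ‖a - c‖ ≤ ‖a - b‖ + ‖b - c‖ :=
  norm_sub_le_norm_sub_add_norm_sub a b c

/-- convexity of the squared norm -/
private lemma aux_convex_sq {H : Type*} [NormedAddCommGroup H] [InnerProductSpace ℝ H]
    (a b : H) (α : ℝ) (h0 : 0 ≤ α) (h1 : α ≤ 1) :
    ‖α • a + (1 - α) • b‖ ^ 2 ≤ α * ‖a‖ ^ 2 + (1 - α) * ‖b‖ ^ 2 := by
  have e1 : ‖α • a + (1 - α) • b‖ ^ 2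
      = α ^ 2 * ‖a‖ ^ 2 + 2 * (α * (1 - α)) * (inner ℝ a b : ℝ) + (1 - α) ^ 2 * ‖b‖ ^ 2 := by
    rw [norm_add_sq_real, norm_smul, norm_smul, real_inner_smul_left, real_inner_smul_right,
      Real.norm_eq_abs, Real.norm_eq_abs, abs_of_nonneg h0, abs_of_nonneg (by linarith)]
    ring
  have e2 : (0:ℝ) ≤ ‖a - b‖ ^ 2 := sq_nonneg _
  rw [norm_sub_sq_real] at e2
  nlinarith [mul_nonneg (mul_nonneg h0 (by linarith : (0:ℝ) ≤ 1 - α)) e2]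

/-- the constraint sets are convex (half-space description) -/
private lemma aux_convex_set {H : Type*} [NormedAddCommGroup H] [InnerProductSpace ℝ H]
    (a b : H) (c : ℝ) : Convex ℝ {v : H | ‖v - a‖ ^ 2 ≤ ‖v - b‖ ^ 2 + c} := by
  have hset : {v : H | ‖v - a‖ ^ 2 ≤ ‖v - b‖ ^ 2 + c}
      = {v : H | 2 * (inner ℝ v (b - a) : ℝ) ≤ ‖b‖ ^ 2 - ‖a‖ ^ 2 + c} := by
    ext v
    simp only [Set.mem_setOf_eq, norm_sub_sq_real, inner_sub_right]
    constructor <;> intro h <;> linarith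
  rw [hset]
  exact convex_halfSpace_le
    ⟨fun u w => by rw [inner_add_left]; ring, fun r u => by rw [real_inner_smul_left, smul_eq_mul]; ring⟩ _

private lemma aux_sq_tendsto_zero {a : ℕ → ℝ} (h0 : ∀ n, 0 ≤ a n)
    (h : Filter.Tendsto (fun n => a n ^ 2) atTop (𝓝 0)) : Filter.Tendsto a atTop (𝓝 0) := by
  have h1 := h.sqrt
  have h2 : (fun n => Real.sqrt (a n ^ 2)) = a := funext fun n => Real.sqrt_sq (h0 n)
  rw [h2, Real.sqrt_zero] at h1
  exact h1

/-- Monotone hybrid method for a single asymptotically quasi-nonexpansive mapping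
in a real Hilbert space (Corollary 3.3, Hilbert-space form). -/
theorem stmt_1
    {H : Type*} [NormedAddCommGroup H] [InnerProductSpace ℝ H] [CompleteSpace H]
    (C : Set H) (hCne : C.Nonempty) (hCcl : IsClosed C) (hCcv : Convex ℝ C)
    (T : H → H) (hTmaps : Set.MapsTo T C C)
    (k : ℕ → ℝ) (hk : ∀ n, 1 ≤ k n) (hklim : Tendsto k atTop (𝓝 1))
    (hAQN : ∀ n, 1 ≤ n → ∀ p ∈ C, T p = p →
      ∀ x ∈ C, ‖p - T^[n] x‖ ^ 2 ≤ k n * ‖p - x‖ ^ 2)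
    (L : ℝ)
    (hLip : ∀ n, 1 ≤ n → ∀ x ∈ C, ∀ y ∈ C, ‖T^[n] x - T^[n] y‖ ≤ L * ‖x - y‖)
    (F : Set H) (hF : F = {x ∈ C | T x = x}) (hFne : F.Nonempty)
    (ω : ℝ) (hω : 0 < ω) (hFbdd : ∀ u ∈ F, ‖u‖ ≤ ω)
    (α : ℕ → ℝ) (hα : ∀ n, α n ∈ Set.Icc (0 : ℝ) 1) (hαlim : Tendsto α atTop (𝓝 0))
    (x : ℕ → H) (y : ℕ → H) (CS : ℕ → Set H)
    (hx0 : x 0 ∈ C) (hCS0 : CS 0 = C)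
    (hy : ∀ n, y n = α n • x n + (1 - α n) • T^[n] (x n))
    (hCS : ∀ n, CS (n + 1) =
      {v ∈ CS n | ‖v - y n‖ ^ 2 ≤ ‖v - x n‖ ^ 2 + (k n - 1) * (ω + ‖x n‖) ^ 2})
    (hproj : ∀ n, x (n + 1) ∈ CS (n + 1) ∧
      ∀ v ∈ CS (n + 1), ‖x (n + 1) - x 0‖ ≤ ‖v - x 0‖) :
    ∃ z ∈ F, (∀ v ∈ F, ‖z - x 0‖ ≤ ‖v - x 0‖) ∧ Tendsto x atTop (𝓝 z) := by
  -- basic set facts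
  have hdec : ∀ n, CS (n + 1) ⊆ CS n := by
    intro n v hv
    rw [hCS n] at hv
    exact hv.1
  have hmono : ∀ {m n : ℕ}, m ≤ n → CS n ⊆ CS m := by
    intro m n h
    exact antitone_nat_of_succ_le hdec h
  have hsubC : ∀ n, CS n ⊆ C := by
    intro n
    exact (hCS0 ▸ hmono (Nat.zero_le n) : CS n ⊆ C)
  have hxmem : ∀ n, x n ∈ CS n := by
    intro n
    cases n with
    | zero => rw [hCS0]; exact hx0
    | succ m => exact (hproj m).1
  have hxC : ∀ n, x n ∈ C := fun n => hsubC n (hxmem n)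
  have hconv : ∀ n, Convex ℝ (CS n) := by
    intro n
    induction n with
    | zero => rw [hCS0]; exact hCcv
    | succ m ih =>
      rw [hCS m]
      exact ih.inter (aux_convex_set (y m) (x m) _)
  -- fixed point set inside every CS n
  have hFsub : ∀ n, F ⊆ CS n := by
    intro n
    induction n with
    | zero =>
      rw [hCS0, hF]
      exact fun p hp => hp.1
    | succ m ih =>
      intro p hp
      have hpC : p ∈ C := (hF ▸ hp).1
      have hpT : T p = p := (hF ▸ hp).2
      have hpω : ‖p‖ ≤ ω := hFbdd p hp
      rw [hCS m]
      refine ⟨ih hp, ?_⟩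
      have hεm : 0 ≤ (k m - 1) * (ω + ‖x m‖) ^ 2 :=
        mul_nonneg (by linarith [hk m]) (sq_nonneg _)
      cases m with
      | zero =>
        have hy0 : y 0 = x 0 := by
          rw [hy 0]
          simp only [Function.iterate_zero_apply]
          rw [← add_smul]
          simp
        rw [hy0]
        linarith
      | succ l =>
        set m := l + 1
        have hA := hAQN m (Nat.le_add_left 1 l) p hpC hpT (x m) (hxC m)
        have hdecomp : p - y m = α m • (p - x m) + (1 - α m) • (p - T^[m] (x m)) := by
          rw [hy m]; module
        have hcv : ‖p - y m‖ ^ 2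
            ≤ α m * ‖p - x m‖ ^ 2 + (1 - α m) * ‖p - T^[m] (x m)‖ ^ 2 := by
          rw [hdecomp]
          exact aux_convex_sq _ _ _ (hα m).1 (hα m).2
        have hbound : ‖p - x m‖ ≤ ω + ‖x m‖ :=
          (norm_sub_le p (x m)).trans (by linarith)
        have hsq : ‖p - x m‖ ^ 2 ≤ (ω + ‖x m‖) ^ 2 :=
          pow_le_pow_left₀ (norm_nonneg _) hbound 2
        have hkm := hk m
        have hα1 := (hα m).1
        have hα2 := (hα m).2
        nlinarith [sq_nonneg ‖p - x m‖, mul_nonneg (sub_nonneg.2 hα2) (sub_nonneg.2 hkm)]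
  -- a fixed point
  obtain ⟨p, hp⟩ := hFne
  have hpC : p ∈ C := (hF ▸ hp).1
  -- norm bound
  have hbd : ∀ n, ‖x n - x 0‖ ≤ ‖p - x 0‖ := by
    intro n
    cases n with
    | zero => simp
    | succ m => exact (hproj m).2 p (hFsub (m + 1) hp)
  -- monotonicity of the distances
  have hdmono : Monotone fun n => ‖x n - x 0‖ := by
    apply monotone_nat_of_le_succ
    intro n
    cases n with
    | zero => simp
    | succ l =>
      exact (hproj l).2 (x (l + 2)) (hmono (Nat.le_succ (l + 1)) (hxmem (l + 2)))
  have hsmono : Monotone fun n => ‖x n - x 0‖ ^ 2 := fun i j hij =>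
    pow_le_pow_left₀ (norm_nonneg _) (hdmono hij) 2
  -- key geometric inequality
  have key : ∀ n m : ℕ, 1 ≤ n → n ≤ m →
      ‖x m - x n‖ ^ 2 ≤ 2 * ‖x m - x 0‖ ^ 2 - 2 * ‖x n - x 0‖ ^ 2 := by
    intro n m hn hnm
    obtain ⟨l, rfl⟩ : ∃ l, n = l + 1 := ⟨n - 1, (Nat.succ_pred_eq_of_pos hn).symm⟩
    set w := (2⁻¹ : ℝ) • (x (l + 1) + x m) with hw
    have hxmmem : x m ∈ CS (l + 1) := hmono hnm (hxmem m)
    have hwmem : w ∈ CS (l + 1) := by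
      have h2 := (hconv (l + 1)) (hxmem (l + 1)) hxmmem
        (by norm_num : (0:ℝ) ≤ 2⁻¹) (by norm_num : (0:ℝ) ≤ 2⁻¹) (by norm_num)
      simpa [hw, smul_add] using h2
    have hmin : ‖x (l + 1) - x 0‖ ≤ ‖w - x 0‖ := (hproj l).2 w hwmem
    set a := x m - x 0 with ha
    set b := x (l + 1) - x 0 with hb
    have h1 : ‖a - b‖ ^ 2 = ‖a‖ ^ 2 - 2 * (inner ℝ a b : ℝ) + ‖b‖ ^ 2 := norm_sub_sq_real a b
    have h2 : ‖a + b‖ ^ 2 = ‖a‖ ^ 2 + 2 * (inner ℝ a b : ℝ) + ‖b‖ ^ 2 := norm_add_sq_real a b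
    have h3 : a + b = (2:ℝ) • (w - x 0) := by rw [hw, ha, hb]; module
    have h4 : ‖(2:ℝ) • (w - x 0)‖ = 2 * ‖w - x 0‖ := by
      rw [norm_smul]; simp
    have h7 : ‖a + b‖ ^ 2 = 4 * ‖w - x 0‖ ^ 2 := by rw [h3, h4]; ring
    have h6 : ‖b‖ ^ 2 ≤ ‖w - x 0‖ ^ 2 := pow_le_pow_left₀ (norm_nonneg _) hmin 2
    have h5 : x m - x (l + 1) = a - b := by rw [ha, hb]; abel
    rw [h5]
    linarith
  -- convergence of distances
  have hBdd : BddAbove (Set.range fun n => ‖x n - x 0‖ ^ 2) := by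
    refine ⟨‖p - x 0‖ ^ 2, ?_⟩
    rintro v ⟨n, rfl⟩
    exact pow_le_pow_left₀ (norm_nonneg _) (hbd n) 2
  have hslim : Tendsto (fun n => ‖x n - x 0‖ ^ 2) atTop (𝓝 (⨆ n, ‖x n - x 0‖ ^ 2)) :=
    tendsto_atTop_ciSup hsmono hBdd
  have hscauchy : CauchySeq fun n => ‖x n - x 0‖ ^ 2 := hslim.cauchySeq
  -- x is Cauchy
  have hxcauchy : CauchySeq x := by
    rw [Metric.cauchySeq_iff']
    intro ε hε
    obtain ⟨N, hN⟩ := Metric.cauchySeq_iff'.1 hscauchy (ε ^ 2 / 4) (by positivity)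
    refine ⟨max N 1, fun n hn => ?_⟩
    set M := max N 1 with hM
    have hM1 : 1 ≤ M := le_max_right N 1
    have hMN : N ≤ M := le_max_left N 1
    have hkey := key M n hM1 hn
    have d1 := hN n (hMN.trans hn)
    have d2 := hN M hMN
    rw [Real.dist_eq] at d1 d2
    have habs : ‖x n - x 0‖ ^ 2 - ‖x M - x 0‖ ^ 2 < ε ^ 2 / 2 := by
      have := abs_sub_abs_le_abs_sub (‖x n - x 0‖ ^ 2 - ‖x N - x 0‖ ^ 2) 0
      have e1 := le_abs_self (‖x n - x 0‖ ^ 2 - ‖x N - x 0‖ ^ 2)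
      have e2 := neg_abs_le (‖x M - x 0‖ ^ 2 - ‖x N - x 0‖ ^ 2)
      linarith
    have hsqlt : ‖x n - x M‖ ^ 2 < ε ^ 2 := by linarith
    have : ‖x n - x M‖ < ε := lt_of_pow_lt_pow_left₀ 2 hε.le hsqlt
    rw [dist_eq_norm]
    exact this
  obtain ⟨z, hz⟩ := cauchySeq_tendsto_of_complete hxcauchy
  have hzC : z ∈ C := hCcl.mem_of_tendsto hz (Filter.Eventually.of_forall hxC)
  -- Lipschitz constant normalized
  set L' := |L| with hL'def
  have hL' : 0 ≤ L' := abs_nonneg L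
  have hLip' : ∀ n, 1 ≤ n → ∀ u ∈ C, ∀ v ∈ C, ‖T^[n] u - T^[n] v‖ ≤ L' * ‖u - v‖ := by
    intro n hn u hu v hv
    exact (hLip n hn u hu v hv).trans
      (mul_le_mul_of_nonneg_right (le_abs_self L) (norm_nonneg _))
  -- errors tend to zero
  have hxbd : ∀ n, ‖x n‖ ≤ ‖p - x 0‖ + ‖x 0‖ := by
    intro n
    have h1 := hbd n
    have h2 := norm_sub_norm_le (x n) (x 0)
    linarith
  have hεlim : Tendsto (fun n => (k n - 1) * (ω + ‖x n‖) ^ 2) atTop (𝓝 0) := by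
    have hB : ∀ n, (ω + ‖x n‖) ^ 2 ≤ (ω + (‖p - x 0‖ + ‖x 0‖)) ^ 2 := by
      intro n
      apply pow_le_pow_left₀ (by positivity)
      linarith [hxbd n]
    have hg : Tendsto (fun n => (k n - 1) * (ω + (‖p - x 0‖ + ‖x 0‖)) ^ 2) atTop (𝓝 0) := by
      have h0 : Tendsto (fun n => k n - 1) atTop (𝓝 0) := by
        simpa using hklim.sub (tendsto_const_nhds (x := (1:ℝ)))
      simpa using h0.mul_const ((ω + (‖p - x 0‖ + ‖x 0‖)) ^ 2)
    apply squeeze_zero (fun n => mul_nonneg (by linarith [hk n]) (sq_nonneg _)) _ hg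
    intro n
    exact mul_le_mul_of_nonneg_left (hB n) (by linarith [hk n])
  -- successive differences tend to zero
  have hshift1 : Tendsto (fun n => x (n + 1)) atTop (𝓝 z) := hz.comp (tendsto_add_atTop_nat 1)
  have hu : Tendsto (fun n => ‖x (n + 1) - x n‖) atTop (𝓝 0) := by
    have h := hshift1.sub hz
    rw [sub_self] at h
    exact tendsto_zero_iff_norm_tendsto_zero.mp h
  -- ‖x (n+1) - y n‖ → 0
  have hxy1 : Tendsto (fun n => ‖x (n + 1) - y n‖) atTop (𝓝 0) := by
    apply aux_sq_tendsto_zero (fun n => norm_nonneg _)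
    have hle : ∀ n, ‖x (n + 1) - y n‖ ^ 2
        ≤ ‖x (n + 1) - x n‖ ^ 2 + (k n - 1) * (ω + ‖x n‖) ^ 2 := by
      intro n
      have := (hproj n).1
      rw [hCS n] at this
      exact this.2
    have hg : Tendsto (fun n => ‖x (n + 1) - x n‖ ^ 2 + (k n - 1) * (ω + ‖x n‖) ^ 2)
        atTop (𝓝 0) := by
      have h1 : Tendsto (fun n => ‖x (n + 1) - x n‖ ^ 2) atTop (𝓝 0) := by
        have := hu.pow 2
        simpa using this
      simpa using h1.add hεlim
    exact squeeze_zero (fun n => sq_nonneg _) hle hg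
  -- ‖x n - y n‖ → 0
  have hxy : Tendsto (fun n => ‖x n - y n‖) atTop (𝓝 0) := by
    apply squeeze_zero (fun n => norm_nonneg _) (fun n => aux_tri (x n) (x (n + 1)) (y n))
    have h1 : Tendsto (fun n => ‖x n - x (n + 1)‖) atTop (𝓝 0) := by
      have : (fun n => ‖x n - x (n + 1)‖) = fun n => ‖x (n + 1) - x n‖ :=
        funext fun n => norm_sub_rev _ _
      rw [this]; exact hu
    simpa using h1.add hxy1
  -- ‖x n - T^[n] x n‖ → 0
  have ht : Tendsto (fun n => ‖x n - T^[n] (x n)‖) atTop (𝓝 0) := by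
    have hev : ∀ᶠ n in atTop, α n < 1 / 2 :=
      hαlim.eventually_lt_const (by norm_num)
    apply squeeze_zero' (Filter.Eventually.of_forall fun n => norm_nonneg _)
      (g := fun n => 2 * ‖x n - y n‖) _ (by simpa using hxy.const_mul 2)
    filter_upwards [hev] with n hn
    have hxyn : x n - y n = (1 - α n) • (x n - T^[n] (x n)) := by
      rw [hy n]; module
    have hnorm : ‖x n - y n‖ = (1 - α n) * ‖x n - T^[n] (x n)‖ := by
      rw [hxyn, norm_smul, Real.norm_eq_abs, abs_of_nonneg (by linarith [(hα n).2])]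
    nlinarith [norm_nonneg (x n - T^[n] (x n)), (hα n).1]
  -- asymptotic regularity : ‖x n - T x n‖ → 0
  have hbound2 : ∀ n : ℕ, ‖x (n + 2) - T (x (n + 2))‖ ≤
      ‖x (n + 2) - T^[n + 2] (x (n + 2))‖ +
        L' * (L' * ‖x (n + 2) - x (n + 1)‖ + ‖x (n + 1) - T^[n + 1] (x (n + 1))‖ +
          ‖x (n + 1) - x (n + 2)‖) := by
    intro n
    have c2 : x (n + 2) ∈ C := hxC (n + 2)
    have c1 : x (n + 1) ∈ C := hxC (n + 1)
    have hT1 : T^[n + 1] (x (n + 2)) ∈ C := hTmaps.iterate (n + 1) c2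
    have step1 := aux_tri (x (n + 2)) (T^[n + 2] (x (n + 2))) (T (x (n + 2)))
    have step2 : ‖T^[n + 2] (x (n + 2)) - T (x (n + 2))‖
        ≤ L' * ‖T^[n + 1] (x (n + 2)) - x (n + 2)‖ := by
      have h := hLip' 1 le_rfl (T^[n + 1] (x (n + 2))) hT1 (x (n + 2)) c2
      simp only [Function.iterate_one] at h
      rw [Function.iterate_succ_apply' T (n + 1)]
      exact h
    have step3 : ‖T^[n + 1] (x (n + 2)) - x (n + 2)‖
        ≤ L' * ‖x (n + 2) - x (n + 1)‖ + ‖x (n + 1) - T^[n + 1] (x (n + 1))‖ +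
          ‖x (n + 1) - x (n + 2)‖ := by
      have t1 := aux_tri (T^[n + 1] (x (n + 2))) (T^[n + 1] (x (n + 1))) (x (n + 2))
      have t2 := aux_tri (T^[n + 1] (x (n + 1))) (x (n + 1)) (x (n + 2))
      have h2 := hLip' (n + 1) (Nat.le_add_left 1 n) (x (n + 2)) c2 (x (n + 1)) c1
      have h3 : ‖T^[n + 1] (x (n + 1)) - x (n + 1)‖ = ‖x (n + 1) - T^[n + 1] (x (n + 1))‖ :=
        norm_sub_rev _ _
      linarith
    have := mul_le_mul_of_nonneg_left step3 hL'
    linarith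
  have hTx : Tendsto (fun n => ‖x n - T (x n)‖) atTop (𝓝 0) := by
    have hA : Tendsto (fun n => ‖x (n + 2) - T^[n + 2] (x (n + 2))‖) atTop (𝓝 0) :=
      ht.comp (tendsto_add_atTop_nat 2)
    have hB : Tendsto (fun n => ‖x (n + 1) - T^[n + 1] (x (n + 1))‖) atTop (𝓝 0) :=
      ht.comp (tendsto_add_atTop_nat 1)
    have hu2 : Tendsto (fun n => ‖x (n + 2) - x (n + 1)‖) atTop (𝓝 0) :=
      (hu.comp (tendsto_add_atTop_nat 1))
    have hu2' : Tendsto (fun n => ‖x (n + 1) - x (n + 2)‖) atTop (𝓝 0) := by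
      have : (fun n => ‖x (n + 1) - x (n + 2)‖) = fun n => ‖x (n + 2) - x (n + 1)‖ :=
        funext fun n => norm_sub_rev _ _
      rw [this]; exact hu2
    have hg : Tendsto (fun n => ‖x (n + 2) - T^[n + 2] (x (n + 2))‖ +
        L' * (L' * ‖x (n + 2) - x (n + 1)‖ + ‖x (n + 1) - T^[n + 1] (x (n + 1))‖ +
          ‖x (n + 1) - x (n + 2)‖)) atTop (𝓝 0) := by
      have := hA.add ((((hu2.const_mul L').add hB).add hu2').const_mul L')
      simpa using this
    have h2 : Tendsto (fun n => ‖x (n + 2) - T (x (n + 2))‖) atTop (𝓝 0) :=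
      squeeze_zero (fun n => norm_nonneg _) hbound2 hg
    exact (tendsto_add_atTop_iff_nat (f := fun n => ‖x n - T (x n)‖) 2).mp h2
  -- z is a fixed point
  have hzT : T z = z := by
    have hb2 : ∀ n, ‖z - T z‖ ≤ ‖z - x n‖ + L' * ‖z - x n‖ + ‖x n - T (x n)‖ := by
      intro n
      have h1 := aux_tri z (x n) (T z)
      have h2 := aux_tri (x n) (T (x n)) (T z)
      have h3 := hLip' 1 le_rfl (x n) (hxC n) z hzC
      simp only [Function.iterate_one] at h3
      have h4 : ‖x n - z‖ = ‖z - x n‖ := norm_sub_rev _ _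
      rw [h4] at h3
      linarith
    have hzx : Tendsto (fun n => ‖z - x n‖) atTop (𝓝 0) := by
      have h := (tendsto_const_nhds (x := z) (f := atTop)).sub hz
      rw [sub_self] at h
      exact tendsto_zero_iff_norm_tendsto_zero.mp h
    have hrhs : Tendsto (fun n => ‖z - x n‖ + L' * ‖z - x n‖ + ‖x n - T (x n)‖) atTop (𝓝 0) := by
      have := (hzx.add (hzx.const_mul L')).add hTx
      simpa using this
    have hle : ‖z - T z‖ ≤ 0 := le_of_tendsto_of_tendsto' tendsto_const_nhds hrhs hb2
    have : z - T z = 0 := norm_le_zero_iff.mp hle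
    have := sub_eq_zero.mp this
    exact this.symm
  refine ⟨z, ?_, ?_, hz⟩
  · rw [hF]; exact ⟨hzC, hzT⟩
  · intro v hv
    have hlim : Tendsto (fun n => ‖x (n + 1) - x 0‖) atTop (𝓝 ‖z - x 0‖) :=
      (hshift1.sub tendsto_const_nhds).norm
    exact le_of_tendsto hlim
      (Filter.Eventually.of_forall fun n => (hproj n).2 v (hFsub (n + 1) hv))
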